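/- arXiv:2106.02685 — 2 statements merged into one kernel-verified Lean document; each statement's English description precedes it below -/
import Mathlib

section
/- Consider the greedy construction that iterates: while there exists a point p in P such that no point within distance R of p has been assigned to a cluster, create a new cluster centered at p containing all points within distance R of p; then assign every remaining point to the cluster of any assigned point within distance R of it. If R >= max_{p in P} rho_r(p), then every cluster has size at least r and every point is at distance at most 2R from its cluster center; hence the result is a 4-approximate r-gather solution. -/
/-- The distance from `p` to its `r`-th nearest neighbor in `P`. -/
noncomputable def rhoNN {X : Type*} [MetricSpace X] (P : Finset X) (r : ℕ) (p : X) : ℝ :=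
  sInf {R : ℝ | 0 ≤ R ∧ r ≤ (P.filter fun q => dist p q ≤ R).card}

open Classical in
private lemma rhoNN_spec {X : Type*} [MetricSpace X] (P : Finset X) (r : ℕ) (p : X)
    (hcard : r ≤ P.card) (hne : P.Nonempty) :
    0 ≤ rhoNN P r p ∧ r ≤ (P.filter fun q => dist p q ≤ rhoNN P r p).card := by
  have hset : {R : ℝ | 0 ≤ R ∧ r ≤ (P.filter fun q => dist p q ≤ R).card}
      = {R : ℝ | 0 ≤ R} ∩ ⋃ T ∈ (P.powersetCard r : Finset (Finset X)),
          {R : ℝ | ∀ q ∈ T, dist p q ≤ R} := by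
    ext R
    simp only [Set.mem_setOf_eq, Set.mem_inter_iff, Set.mem_iUnion, Finset.mem_powersetCard,
      Finset.mem_coe, exists_prop]
    constructor
    · rintro ⟨h0, hc⟩
      obtain ⟨T, hTsub, hTcard⟩ := Finset.exists_subset_card_eq hc
      exact ⟨h0, T, ⟨fun x hx => (Finset.mem_filter.1 (hTsub hx)).1, hTcard⟩,
        fun q hq => (Finset.mem_filter.1 (hTsub hq)).2⟩
    · rintro ⟨h0, T, ⟨hTP, hTcard⟩, hT⟩
      refine ⟨h0, ?_⟩
      calc r = T.card := hTcard.symm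
        _ ≤ _ := Finset.card_le_card (fun q hq => Finset.mem_filter.2 ⟨hTP hq, hT q hq⟩)
  have hclosed : IsClosed {R : ℝ | 0 ≤ R ∧ r ≤ (P.filter fun q => dist p q ≤ R).card} := by
    rw [hset]
    refine (isClosed_le continuous_const continuous_id).inter ?_
    refine (Finset.finite_toSet _).isClosed_biUnion (fun T hT => ?_)
    have : {R : ℝ | ∀ q ∈ T, dist p q ≤ R} = ⋂ q ∈ T, Set.Ici (dist p q) := by
      ext x; simp [Set.mem_iInter]
    rw [this]
    exact isClosed_biInter fun q hq => isClosed_Ici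
  have hne' : {R : ℝ | 0 ≤ R ∧ r ≤ (P.filter fun q => dist p q ≤ R).card}.Nonempty := by
    refine ⟨max (P.sup' hne fun q => dist p q) 0, le_max_right _ _, ?_⟩
    have : P.filter (fun q => dist p q ≤ max (P.sup' hne fun q => dist p q) 0) = P := by
      apply Finset.filter_true_of_mem
      intro q hq
      exact le_max_of_le_left (Finset.le_sup' _ hq)
    rw [this]; exact hcard
  have hbdd : BddBelow {R : ℝ | 0 ≤ R ∧ r ≤ (P.filter fun q => dist p q ≤ R).card} :=
    ⟨0, fun x hx => hx.1⟩
  exact hclosed.csInf_mem hne' hbdd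

private lemma rhoNN_le {X : Type*} [MetricSpace X] (P : Finset X) (r : ℕ) (p : X)
    (R : ℝ) (h0 : 0 ≤ R) (hc : r ≤ (P.filter fun q => dist p q ≤ R).card) :
    rhoNN P r p ≤ R :=
  csInf_le ⟨0, fun x hx => hx.1⟩ ⟨h0, hc⟩

open Classical in
/-- The greedy construction: with `R = max_{p ∈ P} ρ_r(p)`, centers `S` chosen greedily
(a new center is created only when no point within distance `R` of it is assigned;
its cluster receives all points within distance `R`), and every remaining point
assigned to the cluster of an assigned point within distance `R` of it. Then every
cluster has size at least `r`, every point is within distance `2R` of its center, and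
the result is a 4-approximate `r`-gather solution: the radius is at most `4` times
the cost of any valid `r`-gather clustering `f`. -/
theorem stmt9 {X : Type*} [MetricSpace X] (P : Finset X) (r : ℕ) (hr : 1 ≤ r)
    (hcard : r ≤ P.card) (hne : P.Nonempty)
    (R : ℝ) (hR : R = P.sup' hne fun p => rhoNN P r p)
    (S : Finset X) (hSP : S ⊆ P)
    (c : X → X)
    -- every point is assigned to a center from `S`
    (hcS : ∀ p ∈ P, c p ∈ S)
    -- greedy invariant: no point is within distance `R` of two distinct centers
    (hmutex : ∀ s ∈ S, ∀ s' ∈ S, s ≠ s' → ¬ ∃ p ∈ P, dist p s ≤ R ∧ dist p s' ≤ R)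
    -- each center's cluster contains all points within distance `R` of it
    (hball : ∀ s ∈ S, ∀ p ∈ P, dist p s ≤ R → c p = s)
    -- every point is assigned via an assigned point within distance `R` of it
    (hassign : ∀ p ∈ P, ∃ p' ∈ P, dist p p' ≤ R ∧ c p' = c p ∧ dist p' (c p') ≤ R) :
    (∀ p ∈ P, r ≤ (P.filter fun q => c q = c p).card) ∧
    (∀ p ∈ P, dist p (c p) ≤ 2 * R) ∧
    (∀ f : X → X, (∀ p ∈ P, r ≤ (P.filter fun q => f q = f p).card) →
      ∀ p ∈ P, dist p (c p) ≤ 4 * P.sup' hne fun q => dist q (f q)) := by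
  subst hR
  set R := P.sup' hne fun p => rhoNN P r p with hRdef
  have part1 : ∀ p ∈ P, r ≤ (P.filter fun q => c q = c p).card := by
    intro p hp
    have hs : c p ∈ S := hcS p hp
    have hsP : c p ∈ P := hSP hs
    obtain ⟨h0, hcnt⟩ := rhoNN_spec P r (c p) hcard hne
    have hle : rhoNN P r (c p) ≤ R := Finset.le_sup' _ hsP
    refine le_trans hcnt (Finset.card_le_card ?_)
    intro q hq
    rw [Finset.mem_filter] at hq ⊢
    refine ⟨hq.1, ?_⟩
    have : dist q (c p) ≤ R := by
      rw [dist_comm]; exact hq.2.trans hle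
    exact hball _ hs q hq.1 this
  have part2 : ∀ p ∈ P, dist p (c p) ≤ 2 * R := by
    intro p hp
    obtain ⟨p', hp'P, hd, hcc, hd'⟩ := hassign p hp
    calc dist p (c p) ≤ dist p p' + dist p' (c p) := dist_triangle _ _ _
      _ = dist p p' + dist p' (c p') := by rw [hcc]
      _ ≤ R + R := add_le_add hd hd'
      _ = 2 * R := by ring
  refine ⟨part1, part2, ?_⟩
  intro f hf p hp
  set ρ := P.sup' hne fun q => dist q (f q) with hρ
  have hρ0 : 0 ≤ ρ := by
    obtain ⟨x, hx⟩ := hne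
    exact le_trans dist_nonneg (Finset.le_sup' (fun q => dist q (f q)) hx)
  have hRρ : R ≤ 2 * ρ := by
    apply Finset.sup'_le
    intro q hq
    apply rhoNN_le
    · positivity
    · refine le_trans (hf q hq) (Finset.card_le_card ?_)
      intro x hx
      rw [Finset.mem_filter] at hx ⊢
      refine ⟨hx.1, ?_⟩
      calc dist q x ≤ dist q (f q) + dist (f q) x := dist_triangle _ _ _
        _ = dist q (f q) + dist x (f x) := by
              have h2 : dist (f q) x = dist x (f x) := by rw [← hx.2, dist_comm]
              rw [h2]
        _ ≤ ρ + ρ := add_le_add (Finset.le_sup' (fun y => dist y (f y)) hq)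
              (Finset.le_sup' (fun y => dist y (f y)) hx.1)
        _ = 2 * ρ := by ring
  calc dist p (c p) ≤ 2 * R := part2 p hp
    _ ≤ 2 * (2 * ρ) := by linarith
    _ = 4 * ρ := by ring
end

section
/- In the pointwise r-gather algorithm, after the i-th phase (at scale R_i = 2^i * delta), every cluster in the current family has radius at most 2 * beta * C * R_i. -/
/-- `u` and `v` are within graph distance `k` in `G`. -/
def withinDist {V : Type*} (G : SimpleGraph V) (k : ℕ) (u v : V) : Prop :=
  ∃ w : G.Walk u v, w.length ≤ k

/-- The subgraph of the `k`-th power of `G` induced by the vertex set `A`. -/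
def inducedPower {V : Type*} (G : SimpleGraph V) (A : Set V) (k : ℕ) : SimpleGraph V where
  Adj u v := u ≠ v ∧ u ∈ A ∧ v ∈ A ∧ withinDist G k u v
  symm := by
    constructor
    rintro u v ⟨h1, h2, h3, w, hw⟩
    exact ⟨h1.symm, h3, h2, w.reverse, by simpa using hw⟩
  loopless := by constructor; rintro u ⟨h1, -⟩; exact h1 rfl


private lemma walk_dist_le {X : Type*} [MetricSpace X] {G : SimpleGraph X} {L : ℝ}
    (hadj : ∀ a b, G.Adj a b → dist a b ≤ L) :
    ∀ {u v : X} (w : G.Walk u v), dist u v ≤ w.length * L := by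
  intro u v w
  induction w with
  | nil => simp
  | @cons a b c h w ih =>
    have := dist_triangle a b c
    have h1 := hadj _ _ h
    simp only [SimpleGraph.Walk.length_cons]
    push_cast
    nlinarith

private lemma within_dist_le {X : Type*} [MetricSpace X] {G : SimpleGraph X} {L : ℝ}
    (hL : 0 ≤ L) (hadj : ∀ a b, G.Adj a b → dist a b ≤ L) {k : ℕ} {u v : X}
    (h : withinDist G k u v) : dist u v ≤ k * L := by
  obtain ⟨w, hw⟩ := h
  calc dist u v ≤ w.length * L := walk_dist_le hadj w
  _ ≤ k * L := by
      have : (w.length : ℝ) ≤ k := by exact_mod_cast hw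
      nlinarith

open Classical in
/-- Pointwise `r`-gather algorithm (Algorithm 4), radius invariant: after phase `i`
(at scale `R_i = 2^i·δ`), every cluster of the current family has radius at most
`2·β·C·R_i`.  Here `c i` is the partial center assignment at the start of phase `i`
(so `c (i+1)` is the assignment after phase `i`), and the hypotheses describe the
phases of the algorithm. -/
theorem stmt11 {X : Type*} [MetricSpace X]
    (P : Finset X) (r : ℕ) (hr : 1 ≤ r)
    (C : ℝ) (hC : 1 ≤ C) (β : ℕ) (hβ : 1 ≤ β) (δ : ℝ) (hδ : 0 < δ)
    (G : ℕ → SimpleGraph X)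
    (c : ℕ → X → Option X)
    (Pp Ppp Pppp : ℕ → Finset X) (S : ℕ → Finset X)
    -- `G i` is a `C`-approximate `(R_i, r)`-near neighbor graph of `P`
    (hGP : ∀ i p q, (G i).Adj p q → p ∈ P ∧ q ∈ P)
    (hG1 : ∀ i p q, (G i).Adj p q → dist p q ≤ C * (2 ^ i * δ))
    (hG2 : ∀ i, ∀ p ∈ P,
      r ≤ (P.filter fun q => (G i).Adj p q ∨ q = p).card ∨
      ∀ q ∈ P, dist p q ≤ 2 ^ i * δ → ((G i).Adj p q ∨ q = p))
    -- `P'_i`: vertices with at least `r` vertices in their closed `G i`-neighborhood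
    (hPp : ∀ i, Pp i = P.filter fun p =>
      r ≤ (P.filter fun q => (G i).Adj p q ∨ q = p).card)
    -- `P''_i`: vertices of `P'_i` whose closed neighborhood is entirely unclustered
    (hPpp : ∀ i, Ppp i = (Pp i).filter fun p =>
      ∀ q ∈ P, ((G i).Adj p q ∨ q = p) → c i q = Option.none)
    -- `S i` is a `β`-ruling set of `(G_i²)[P''_i]`
    (hS1 : ∀ i, S i ⊆ Ppp i)
    (hS2 : ∀ i, ∀ s ∈ S i, ∀ s' ∈ S i, s ≠ s' →
      ¬ (inducedPower (G i) (↑(Ppp i)) 2).Adj s s')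
    (hS3 : ∀ i, ∀ p ∈ Ppp i, ∃ s ∈ S i,
      withinDist (inducedPower (G i) (↑(Ppp i)) 2) β p s)
    -- `P'''_i`: unclustered points at `G i`-distance at most `2β` from `S i`
    (hPppp : ∀ i, Pppp i = P.filter fun p =>
      c i p = Option.none ∧ ∃ s ∈ S i, withinDist (G i) (2 * β) p s)
    -- no point is clustered initially, and points outside `P` are never clustered
    (hinit : ∀ p, c 0 p = Option.none)
    (hout : ∀ i p, p ∉ P → c i p = Option.none)
    -- phase `i`: each point of `S i` becomes the center of a new cluster
    (hU1 : ∀ i, ∀ s ∈ S i, c (i + 1) s = some s)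
    -- each point of `P'''_i` joins the cluster of a closest member of `S i`
    (hU2 : ∀ i, ∀ p ∈ Pppp i, ∃ s ∈ S i, c (i + 1) p = some s ∧
      withinDist (G i) (2 * β) p s ∧
      ∀ s' ∈ S i, ∀ m : ℕ, withinDist (G i) m p s' → withinDist (G i) m p s)
    -- each unclustered point of `P'_i \ P'''_i` joins an adjacent existing cluster
    (hU3 : ∀ i, ∀ p ∈ Pp i, c i p = Option.none → p ∉ Pppp i →
      ∃ q ∈ P, (G i).Adj p q ∧ (c i q).isSome ∧ c (i + 1) p = c i q)
    -- already clustered points keep their centers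
    (hU4 : ∀ i p s, c i p = some s → c (i + 1) p = some s)
    -- no other point is clustered in phase `i`
    (hU5 : ∀ i p, c i p = Option.none → p ∉ Pppp i → p ∉ Pp i →
      c (i + 1) p = Option.none) :
    ∀ i, ∀ p s, c (i + 1) p = some s → dist p s ≤ 2 * β * C * (2 ^ i * δ) := by

  have hb : (1:ℝ) ≤ (β:ℝ) := by exact_mod_cast hβ
  have key : ∀ i, (∀ p s, c i p = some s → dist p s ≤ β * C * (2 ^ i * δ)) →
      ∀ p s, c (i+1) p = some s → dist p s ≤ 2 * β * C * (2 ^ i * δ) := by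
    intro i inv p s hps
    have hR : (0:ℝ) < 2 ^ i * δ := by positivity
    have hL : (0:ℝ) ≤ C * (2 ^ i * δ) := by positivity
    rcases hcp : c i p with _ | t
    · by_cases hp4 : p ∈ Pppp i
      · obtain ⟨s', hs'S, hcs', hwd, -⟩ := hU2 i p hp4
        have hss : s' = s := by
          rw [hps] at hcs'; exact (Option.some_inj.mp hcs'.symm)
        subst hss
        have := within_dist_le hL (hG1 i) hwd
        calc dist p s' ≤ (2 * β : ℕ) * (C * (2 ^ i * δ)) := this
        _ = 2 * β * C * (2 ^ i * δ) := by push_cast; ring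
      · by_cases hp1 : p ∈ Pp i
        · obtain ⟨q, hqP, hadj, hsome, heq⟩ := hU3 i p hp1 hcp hp4
          obtain ⟨t, ht⟩ := Option.isSome_iff_exists.mp hsome
          have hts : t = s := by
            rw [ht] at heq; rw [hps] at heq; exact (Option.some_inj.mp heq.symm)
          subst hts
          have h1 : dist p q ≤ C * (2 ^ i * δ) := hG1 i p q hadj
          have h2 : dist q t ≤ β * C * (2 ^ i * δ) := inv q t ht
          have h3 := dist_triangle p q t
          nlinarith
        · rw [hU5 i p hcp hp4 hp1] at hps; simp at hps
    · have h1 := hU4 i p t hcp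
      have hts : t = s := by rw [hps] at h1; exact Option.some_inj.mp h1.symm
      subst hts
      have h2 : dist p t ≤ β * C * (2 ^ i * δ) := inv p t hcp
      have hR : (0:ℝ) < 2 ^ i * δ := by positivity
      nlinarith
  have inv : ∀ j, ∀ p s, c j p = some s → dist p s ≤ β * C * (2 ^ j * δ) := by
    intro j
    induction j with
    | zero => intro p s h; rw [hinit p] at h; simp at h
    | succ n ih =>
      intro p s h
      calc dist p s ≤ 2 * β * C * (2 ^ n * δ) := key n ih p s h
      _ = β * C * (2 ^ (n+1) * δ) := by ring
  intro i
  exact key i (inv i)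
end
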